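/- Under the ideal cluster assumption (A_{ij} = 0 whenever y_i ≠ y_j), let m and p be distinct indices with p ≤ l (p labeled), y_m = y_p, and A_{mp} = 0, and let ε > 0. Define A' to be equal to A except that A'_{mp} = A'_{pm} = ε. Then A' is again symmetric with nonnegative entries, zero diagonal, and positive row sums, A' satisfies the ideal cluster assumption, and the accuracy computed from A' is at least the accuracy computed from A, i.e., Acc(A') ≥ Acc(A). -/

import Mathlib

open Matrix BigOperators Finset

attribute [local instance] Classical.propDecidable

/-- Row sum `d_i = Σ_j A_{ij}` of the affinity matrix. -/
noncomputable def rowSum {n : ℕ} (A : Matrix (Fin n) (Fin n) ℝ) (i : Fin n) : ℝ :=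
  ∑ j, A i j

/-- The normalized matrix `S = D^{-1/2} A D^{-1/2}`. -/
noncomputable def Smat {n : ℕ} (A : Matrix (Fin n) (Fin n) ℝ) : Matrix (Fin n) (Fin n) ℝ :=
  Matrix.diagonal (fun i => (Real.sqrt (rowSum A i))⁻¹) * A *
    Matrix.diagonal (fun i => (Real.sqrt (rowSum A i))⁻¹)

/-- Label matrix `Y` (indices `i` with `(i : ℕ) < l` are the labeled ones). -/
noncomputable def Ymat {n K : ℕ} (l : ℕ) (y : Fin n → Fin K) : Matrix (Fin n) (Fin K) ℝ :=
  fun i c => if (i : ℕ) < l ∧ y i = c then 1 else 0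

/-- `F* = (I - α S)^{-1} Y`. -/
noncomputable def Fstar {n K : ℕ} (l : ℕ) (y : Fin n → Fin K) (α : ℝ)
    (A : Matrix (Fin n) (Fin n) ℝ) : Matrix (Fin n) (Fin K) ℝ :=
  (1 - α • Smat A)⁻¹ * Ymat l y

/-- Instance `i` is correctly predicted: `F*_{i, y_i} > F*_{i, c}` for all `c ≠ y_i`. -/
def CorrectlyPredicted {n K : ℕ} (l : ℕ) (y : Fin n → Fin K) (α : ℝ)
    (A : Matrix (Fin n) (Fin n) ℝ) (i : Fin n) : Prop :=
  ∀ c : Fin K, c ≠ y i → Fstar l y α A i c < Fstar l y α A i (y i)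

/-- Accuracy on the unlabeled instances (those with `(i : ℕ) ≥ l`). -/
noncomputable def AccLP {n K : ℕ} (l : ℕ) (y : Fin n → Fin K) (α : ℝ)
    (A : Matrix (Fin n) (Fin n) ℝ) : ℝ :=
  ((Finset.univ.filter
      (fun i : Fin n => l ≤ (i : ℕ) ∧ CorrectlyPredicted l y α A i)).card : ℝ) /
    ((n : ℝ) - (l : ℝ))

/-- `i` and `j` are connected w.r.t. `B`: a finite sequence of at least one step
with positive affinities joins them. -/
def Connected {n : ℕ} (B : Matrix (Fin n) (Fin n) ℝ) : Fin n → Fin n → Prop :=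
  Relation.TransGen (fun i j => 0 < B i j)

section Aux

attribute [local instance] Matrix.linftyOpNormedRing Matrix.linftyOpNormedSpace

variable {n : ℕ}

noncomputable local instance : CompleteSpace (Matrix (Fin n) (Fin n) ℝ) :=
  FiniteDimensional.complete ℝ _

/-- The random-walk matrix `P = D⁻¹ A`. -/
noncomputable def Pmat (A : Matrix (Fin n) (Fin n) ℝ) : Matrix (Fin n) (Fin n) ℝ :=
  fun i j => A i j / rowSum A i

/-- The Neumann series `G = Σ (αP)^k`. -/
noncomputable def Gmat (α : ℝ) (A : Matrix (Fin n) (Fin n) ℝ) : Matrix (Fin n) (Fin n) ℝ :=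
  ∑' k : ℕ, (α • Pmat A) ^ k

noncomputable def entryCLM (i j : Fin n) : Matrix (Fin n) (Fin n) ℝ →L[ℝ] ℝ :=
  LinearMap.toContinuousLinearMap
    { toFun := fun M => M i j
      map_add' := fun _ _ => rfl
      map_smul' := fun _ _ => rfl }

variable {A : Matrix (Fin n) (Fin n) ℝ} {α : ℝ}

lemma Pmat_nonneg (hnonneg : ∀ i j, 0 ≤ A i j) (hrow : ∀ i, 0 < rowSum A i) (i j : Fin n) :
    0 ≤ Pmat A i j := div_nonneg (hnonneg i j) (hrow i).le

lemma Pmat_rowsum (hrow : ∀ i, 0 < rowSum A i) (i : Fin n) : ∑ j, Pmat A i j = 1 := by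
  have h : ∑ j, Pmat A i j = (∑ j, A i j) / rowSum A i := by
    rw [Finset.sum_div]; rfl
  rw [h]
  exact div_self (hrow i).ne'

lemma norm_smul_Pmat_lt (hnonneg : ∀ i j, 0 ≤ A i j) (hrow : ∀ i, 0 < rowSum A i)
    (hα0 : 0 < α) (hα1 : α < 1) : ‖α • Pmat A‖ < 1 := by
  have hP : ‖Pmat A‖ ≤ 1 := by
    have h1 : ‖Pmat A‖₊ ≤ 1 := by
      rw [Matrix.linfty_opNNNorm_def]
      refine Finset.sup_le fun i _ => ?_
      have : ((∑ j, ‖Pmat A i j‖₊ : NNReal) : ℝ) = ((1 : NNReal) : ℝ) := by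
        push_cast
        calc ∑ j, ‖Pmat A i j‖ = ∑ j, Pmat A i j := by
              refine Finset.sum_congr rfl fun j _ => ?_
              rw [Real.norm_eq_abs, abs_of_nonneg (Pmat_nonneg hnonneg hrow i j)]
          _ = 1 := Pmat_rowsum hrow i
      exact_mod_cast this.le
    calc ‖Pmat A‖ = ((‖Pmat A‖₊ : NNReal) : ℝ) := (coe_nnnorm _).symm
      _ ≤ ((1 : NNReal) : ℝ) := by exact_mod_cast h1
      _ = 1 := by norm_num
  calc ‖α • Pmat A‖ = ‖α‖ * ‖Pmat A‖ := norm_smul α (Pmat A)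
    _ ≤ ‖α‖ * 1 := by have : 0 ≤ ‖α‖ := norm_nonneg _; nlinarith [norm_nonneg (Pmat A)]
    _ = |α| := by rw [mul_one, Real.norm_eq_abs]
    _ = α := abs_of_pos hα0
    _ < 1 := hα1

lemma Gmat_hasSum (hn : ‖α • Pmat A‖ < 1) (i j : Fin n) :
    HasSum (fun k : ℕ => α ^ k * ((Pmat A) ^ k) i j) (Gmat α A i j) := by
  have hs : Summable (fun k : ℕ => (α • Pmat A) ^ k) := summable_geometric_of_norm_lt_one hn
  have h := (entryCLM i j).hasSum hs.hasSum
  have he : ∀ k : ℕ, entryCLM i j ((α • Pmat A) ^ k) = α ^ k * ((Pmat A) ^ k) i j := by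
    intro k
    rw [smul_pow]
    rfl
  simp only [he] at h
  exact h

lemma pow_entry_nonneg {P : Matrix (Fin n) (Fin n) ℝ} (h : ∀ i j, 0 ≤ P i j) :
    ∀ (k : ℕ) (i j : Fin n), 0 ≤ (P ^ k) i j := by
  intro k
  induction k with
  | zero => intro i j; simp only [pow_zero, Matrix.one_apply]; split <;> norm_num
  | succ k ih =>
    intro i j
    rw [pow_succ, Matrix.mul_apply]
    exact Finset.sum_nonneg fun t _ => mul_nonneg (ih i t) (h t j)

lemma exists_pos_of_sum_pos {ι : Type*} {s : Finset ι} {f : ι → ℝ} (h : 0 < ∑ j ∈ s, f j) :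
    ∃ j ∈ s, 0 < f j := by
  obtain ⟨j, hj, hlt⟩ := Finset.exists_lt_of_sum_lt (by simpa using h :
    ∑ j ∈ s, (0 : ℝ) < ∑ j ∈ s, f j)
  exact ⟨j, hj, hlt⟩

lemma pow_entry_pos_mono {P Q : Matrix (Fin n) (Fin n) ℝ}
    (hPn : ∀ i j, 0 ≤ P i j) (hQn : ∀ i j, 0 ≤ Q i j)
    (h : ∀ i j, 0 < P i j → 0 < Q i j) :
    ∀ (k : ℕ) (i j : Fin n), 0 < (P ^ k) i j → 0 < (Q ^ k) i j := by
  intro k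
  induction k with
  | zero =>
    intro i j hij
    simp only [pow_zero, Matrix.one_apply] at *
    split at hij
    · subst ‹i = j›; simp
    · norm_num at hij
  | succ k ih =>
    intro i j hij
    rw [pow_succ, Matrix.mul_apply] at hij
    obtain ⟨t, -, ht⟩ := exists_pos_of_sum_pos hij
    have h1 : 0 < (P ^ k) i t ∧ 0 < P t j := by
      rcases mul_pos_iff.mp ht with h' | h'
      · exact h'
      · exact absurd h'.1 (not_lt.mpr (pow_entry_nonneg hPn k i t))
    rw [pow_succ, Matrix.mul_apply]
    refine Finset.sum_pos' (fun t' _ => mul_nonneg (pow_entry_nonneg hQn k i t') (hQn t' j))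
      ⟨t, Finset.mem_univ t, mul_pos (ih i t h1.1) (h t j h1.2)⟩

lemma Gmat_nonneg (hnonneg : ∀ i j, 0 ≤ A i j) (hrow : ∀ i, 0 < rowSum A i)
    (hn : ‖α • Pmat A‖ < 1) (hα0 : 0 < α) (i j : Fin n) : 0 ≤ Gmat α A i j :=
  (Gmat_hasSum hn i j).nonneg fun k =>
    mul_nonneg (pow_nonneg hα0.le k) (pow_entry_nonneg (Pmat_nonneg hnonneg hrow) k i j)

lemma Gmat_pos_iff (hnonneg : ∀ i j, 0 ≤ A i j) (hrow : ∀ i, 0 < rowSum A i)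
    (hn : ‖α • Pmat A‖ < 1) (hα0 : 0 < α) (i j : Fin n) :
    0 < Gmat α A i j ↔ ∃ k : ℕ, 0 < ((Pmat A) ^ k) i j := by
  have hG := Gmat_hasSum (A := A) hn i j
  constructor
  · intro h
    by_contra hc
    push_neg at hc
    have hz : (fun k : ℕ => α ^ k * ((Pmat A) ^ k) i j) = fun _ => (0 : ℝ) := by
      funext k
      have h0 : ((Pmat A) ^ k) i j = 0 :=
        le_antisymm (hc k) (pow_entry_nonneg (Pmat_nonneg hnonneg hrow) k i j)
      rw [h0, mul_zero]
    rw [hz] at hG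
    have := hG.unique hasSum_zero
    linarith
  · rintro ⟨k, hk⟩
    rw [← hG.tsum_eq]
    exact Summable.tsum_pos hG.summable
      (fun k' => mul_nonneg (pow_nonneg hα0.le k')
        (pow_entry_nonneg (Pmat_nonneg hnonneg hrow) k' i j)) k
      (mul_pos (pow_pos hα0 k) hk)


lemma pow_entry_cluster {K : ℕ} {y : Fin n → Fin K} {P : Matrix (Fin n) (Fin n) ℝ}
    (h : ∀ i j, y i ≠ y j → P i j = 0) :
    ∀ (k : ℕ) (i j : Fin n), y i ≠ y j → (P ^ k) i j = 0 := by
  intro k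
  induction k with
  | zero =>
    intro i j hij
    simp only [pow_zero, Matrix.one_apply]
    rw [if_neg]
    rintro rfl
    exact hij rfl
  | succ k ih =>
    intro i j hij
    rw [pow_succ, Matrix.mul_apply]
    refine Finset.sum_eq_zero fun t _ => ?_
    by_cases h1 : y i = y t
    · rw [h t j (h1 ▸ hij), mul_zero]
    · rw [ih i t h1, zero_mul]

lemma Gmat_cluster {K : ℕ} {y : Fin n → Fin K} (hn : ‖α • Pmat A‖ < 1)
    (hcluster : ∀ i j, y i ≠ y j → Pmat A i j = 0) {i j : Fin n} (hij : y i ≠ y j) :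
    Gmat α A i j = 0 := by
  have hG := Gmat_hasSum (A := A) hn i j
  have hz : (fun k : ℕ => α ^ k * ((Pmat A) ^ k) i j) = fun _ => (0 : ℝ) := by
    funext k
    rw [pow_entry_cluster hcluster k i j hij, mul_zero]
  rw [hz] at hG
  exact hG.unique hasSum_zero

lemma sqrt_rowSum_pos (hrow : ∀ i, 0 < rowSum A i) (i : Fin n) :
    0 < Real.sqrt (rowSum A i) := Real.sqrt_pos.mpr (hrow i)

lemma inv_one_sub_smul_Smat (hrow : ∀ i, 0 < rowSum A i) (hn : ‖α • Pmat A‖ < 1) :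
    (1 - α • Smat A)⁻¹ =
      Matrix.diagonal (fun i => Real.sqrt (rowSum A i)) * Gmat α A *
        Matrix.diagonal (fun i => (Real.sqrt (rowSum A i))⁻¹) := by
  set E : Matrix (Fin n) (Fin n) ℝ := Matrix.diagonal (fun i => Real.sqrt (rowSum A i)) with hE
  set Einv : Matrix (Fin n) (Fin n) ℝ :=
    Matrix.diagonal (fun i => (Real.sqrt (rowSum A i))⁻¹) with hEinv
  have hEE : E * Einv = 1 := by
    rw [hE, hEinv, Matrix.diagonal_mul_diagonal]
    rw [show (fun i => Real.sqrt (rowSum A i) * (Real.sqrt (rowSum A i))⁻¹) = fun _ => (1:ℝ) from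
      funext fun i => mul_inv_cancel₀ (sqrt_rowSum_pos hrow i).ne']
    exact Matrix.diagonal_one
  have hEE' : Einv * E = 1 := by
    rw [hE, hEinv, Matrix.diagonal_mul_diagonal]
    rw [show (fun i => (Real.sqrt (rowSum A i))⁻¹ * Real.sqrt (rowSum A i)) = fun _ => (1:ℝ) from
      funext fun i => inv_mul_cancel₀ (sqrt_rowSum_pos hrow i).ne']
    exact Matrix.diagonal_one
  have hS : Smat A = E * Pmat A * Einv := by
    ext i j
    rw [Smat, Matrix.mul_diagonal, Matrix.mul_diagonal, Matrix.diagonal_mul, Matrix.diagonal_mul]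
    have hd : rowSum A i = Real.sqrt (rowSum A i) * Real.sqrt (rowSum A i) :=
      (Real.mul_self_sqrt (hrow i).le).symm
    show (Real.sqrt (rowSum A i))⁻¹ * A i j * (Real.sqrt (rowSum A j))⁻¹ =
      Real.sqrt (rowSum A i) * (A i j / rowSum A i) * (Real.sqrt (rowSum A j))⁻¹
    have hne := (sqrt_rowSum_pos hrow i).ne'
    have h2 : Real.sqrt (rowSum A i) * (Real.sqrt (rowSum A i))⁻¹ = 1 := mul_inv_cancel₀ hne
    have hd0 : rowSum A i ≠ 0 := (hrow i).ne'
    have key2 : Real.sqrt (rowSum A i) * A i j / rowSum A i =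
        (Real.sqrt (rowSum A i))⁻¹ * A i j := by
      rw [div_eq_iff hd0]
      linear_combination (-(Real.sqrt (rowSum A i))⁻¹ * A i j) * hd +
        (-(Real.sqrt (rowSum A i)) * A i j) * h2
    rw [← mul_div_assoc, key2]
  have hone : (1 : Matrix (Fin n) (Fin n) ℝ) - α • Smat A = E * (1 - α • Pmat A) * Einv := by
    rw [hS, Matrix.mul_sub, Matrix.sub_mul, Matrix.mul_one, hEE, Matrix.mul_smul,
      Matrix.smul_mul]
  have hPG : (1 - α • Pmat A) * Gmat α A = 1 := mul_neg_geom_series _ hn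
  apply Matrix.inv_eq_right_inv
  have hcancel : ∀ X : Matrix (Fin n) (Fin n) ℝ, Einv * (E * X) = X := fun X => by
    rw [← Matrix.mul_assoc, hEE', Matrix.one_mul]
  rw [hone]
  simp only [Matrix.mul_assoc]
  rw [hcancel, ← Matrix.mul_assoc (1 - α • Pmat A), hPG, Matrix.one_mul, hEE]

lemma Fstar_apply {K : ℕ} (l : ℕ) (y : Fin n → Fin K) (hrow : ∀ i, 0 < rowSum A i)
    (hn : ‖α • Pmat A‖ < 1) (i : Fin n) (c : Fin K) :
    Fstar l y α A i c = ∑ j : Fin n, (if (j : ℕ) < l ∧ y j = c then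
      Real.sqrt (rowSum A i) * Gmat α A i j * (Real.sqrt (rowSum A j))⁻¹ else 0) := by
  rw [Fstar, inv_one_sub_smul_Smat hrow hn, Matrix.mul_apply]
  refine Finset.sum_congr rfl fun j _ => ?_
  rw [Matrix.mul_diagonal, Matrix.diagonal_mul]
  show Real.sqrt (rowSum A i) * Gmat α A i j * (Real.sqrt (rowSum A j))⁻¹ *
    (if (j : ℕ) < l ∧ y j = c then (1:ℝ) else 0) = _
  split <;> simp


lemma Pmat_cluster {K : ℕ} {y : Fin n → Fin K} (hcluster : ∀ i j, y i ≠ y j → A i j = 0) :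
    ∀ i j, y i ≠ y j → Pmat A i j = 0 := fun i j hij => by
  show A i j / rowSum A i = 0
  rw [hcluster i j hij, zero_div]

lemma Fstar_off {K : ℕ} (l : ℕ) (y : Fin n → Fin K)
    (hrow : ∀ i, 0 < rowSum A i) (hn : ‖α • Pmat A‖ < 1)
    (hcluster : ∀ i j, y i ≠ y j → A i j = 0)
    (i : Fin n) (c : Fin K) (hc : c ≠ y i) : Fstar l y α A i c = 0 := by
  rw [Fstar_apply l y hrow hn]
  refine Finset.sum_eq_zero fun j _ => ?_
  split
  · next hcond =>
    have hyij : y i ≠ y j := fun h => hc (by rw [← hcond.2, ← h])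
    rw [Gmat_cluster hn (Pmat_cluster hcluster) hyij, mul_zero, zero_mul]
  · rfl

lemma Fstar_diag_pos_iff {K : ℕ} (l : ℕ) (y : Fin n → Fin K)
    (hnonneg : ∀ i j, 0 ≤ A i j) (hrow : ∀ i, 0 < rowSum A i)
    (hn : ‖α • Pmat A‖ < 1) (hα0 : 0 < α) (i : Fin n) :
    0 < Fstar l y α A i (y i) ↔
      ∃ j : Fin n, (j : ℕ) < l ∧ y j = y i ∧ ∃ k : ℕ, 0 < ((Pmat A) ^ k) i j := by
  rw [Fstar_apply l y hrow hn]
  have hterm : ∀ j : Fin n, 0 ≤ (if (j : ℕ) < l ∧ y j = y i then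
      Real.sqrt (rowSum A i) * Gmat α A i j * (Real.sqrt (rowSum A j))⁻¹ else 0) := by
    intro j
    split
    · exact mul_nonneg (mul_nonneg (sqrt_rowSum_pos hrow i).le
        (Gmat_nonneg hnonneg hrow hn hα0 i j)) (inv_nonneg.mpr (sqrt_rowSum_pos hrow j).le)
    · exact le_refl 0
  constructor
  · intro h
    obtain ⟨j, -, hj⟩ := exists_pos_of_sum_pos h
    by_cases hcond : (j : ℕ) < l ∧ y j = y i
    · rw [if_pos hcond] at hj
      have hG : 0 < Gmat α A i j := by
        by_contra hng
        push_neg at hng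
        nlinarith [sqrt_rowSum_pos hrow i, inv_pos.mpr (sqrt_rowSum_pos hrow j),
          mul_pos (sqrt_rowSum_pos hrow i) (inv_pos.mpr (sqrt_rowSum_pos hrow j))]
      exact ⟨j, hcond.1, hcond.2, (Gmat_pos_iff hnonneg hrow hn hα0 i j).mp hG⟩
    · rw [if_neg hcond] at hj; exact absurd hj (lt_irrefl 0)
  · rintro ⟨j, hj1, hj2, k, hk⟩
    refine Finset.sum_pos' (fun j' _ => hterm j') ⟨j, Finset.mem_univ j, ?_⟩
    rw [if_pos ⟨hj1, hj2⟩]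
    have hG : 0 < Gmat α A i j := (Gmat_pos_iff hnonneg hrow hn hα0 i j).mpr ⟨k, hk⟩
    exact mul_pos (mul_pos (sqrt_rowSum_pos hrow i) hG) (inv_pos.mpr (sqrt_rowSum_pos hrow j))

end Aux

lemma correct_mono {n K : ℕ} (l : ℕ) (y : Fin n → Fin K) {α : ℝ} (hα0 : 0 < α) (hα1 : α < 1)
    {A A' : Matrix (Fin n) (Fin n) ℝ}
    (hnonneg : ∀ i j, 0 ≤ A i j) (hrow : ∀ i, 0 < rowSum A i)
    (hcluster : ∀ i j, y i ≠ y j → A i j = 0)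
    (hnonneg' : ∀ i j, 0 ≤ A' i j) (hrow' : ∀ i, 0 < rowSum A' i)
    (hcluster' : ∀ i j, y i ≠ y j → A' i j = 0)
    (hpat : ∀ i j, 0 < A i j → 0 < A' i j)
    (i : Fin n) (h : CorrectlyPredicted l y α A i) : CorrectlyPredicted l y α A' i := by
  have hn := norm_smul_Pmat_lt hnonneg hrow hα0 hα1
  have hn' := norm_smul_Pmat_lt hnonneg' hrow' hα0 hα1
  intro c hc
  rw [Fstar_off l y hrow' hn' hcluster' i c hc]
  have h1 := h c hc
  rw [Fstar_off l y hrow hn hcluster i c hc] at h1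
  obtain ⟨j, hj1, hj2, k, hk⟩ := (Fstar_diag_pos_iff l y hnonneg hrow hn hα0 i).mp h1
  refine (Fstar_diag_pos_iff l y hnonneg' hrow' hn' hα0 i).mpr ⟨j, hj1, hj2, k, ?_⟩
  refine pow_entry_pos_mono (Pmat_nonneg hnonneg hrow) (Pmat_nonneg hnonneg' hrow') ?_ k i j hk
  intro a b hab
  have hA : 0 < A a b := by
    have hPab : Pmat A a b = A a b / rowSum A a := rfl
    rw [hPab] at hab
    by_contra hng
    push_neg at hng
    have h0 : A a b = 0 := le_antisymm hng (hnonneg a b)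
    rw [h0, zero_div] at hab
    exact lt_irrefl 0 hab
  exact div_pos (hpat a b hA) (hrow' a)


/-- under the ideal cluster assumption, enhancing a zero-valued affinity
between `m` and a labeled instance `p` of the same true label to `ε > 0` yields a
matrix `A'` that again satisfies all structural assumptions and the ideal cluster
assumption, and the accuracy does not decrease: `Acc(A') ≥ Acc(A)`. -/
theorem lp_augment_acc_nondecreasing
    {n K : ℕ} (l : ℕ) (hl : 0 < l) (hln : l < n) (hK : 0 < K)
    (y : Fin n → Fin K) (α : ℝ) (hα0 : 0 < α) (hα1 : α < 1)
    (A A' : Matrix (Fin n) (Fin n) ℝ)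
    (hsym : A.IsSymm) (hnonneg : ∀ i j, 0 ≤ A i j) (hdiag : ∀ i, A i i = 0)
    (hrow : ∀ i, 0 < rowSum A i)
    (hcluster : ∀ i j, y i ≠ y j → A i j = 0)
    (m p : Fin n) (hmp : m ≠ p) (hp : (p : ℕ) < l) (hy : y m = y p)
    (hAmp : A m p = 0) (ε : ℝ) (hε : 0 < ε)
    (hA' : ∀ i j, A' i j = if (i = m ∧ j = p) ∨ (i = p ∧ j = m) then ε else A i j) :
    A'.IsSymm ∧ (∀ i j, 0 ≤ A' i j) ∧ (∀ i, A' i i = 0) ∧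
      (∀ i, 0 < rowSum A' i) ∧ (∀ i j, y i ≠ y j → A' i j = 0) ∧
      AccLP l y α A ≤ AccLP l y α A' := by
  have hAsymm : ∀ i j : Fin n, A j i = A i j := fun i j => congrFun (congrFun hsym i) j
  have hle : ∀ i j, A i j ≤ A' i j := by
    intro i j
    rw [hA' i j]
    split
    · next h =>
      rcases h with ⟨h1, h2⟩ | ⟨h1, h2⟩
      · rw [h1, h2, hAmp]; exact hε.le
      · rw [h1, h2, hAsymm m p, hAmp]; exact hε.le
    · exact le_refl _
  have hnonneg' : ∀ i j, 0 ≤ A' i j := fun i j => le_trans (hnonneg i j) (hle i j)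
  have hsym' : A'.IsSymm := by
    show A'ᵀ = A'
    ext i j
    rw [Matrix.transpose_apply, hA' j i, hA' i j]
    by_cases h1 : (i = m ∧ j = p) ∨ (i = p ∧ j = m)
    · rw [if_pos (by tauto), if_pos h1]
    · rw [if_neg (by tauto), if_neg h1]
      exact hAsymm i j
  have hdiag' : ∀ i, A' i i = 0 := by
    intro i
    rw [hA' i i, if_neg, hdiag i]
    rintro (⟨rfl, rfl⟩ | ⟨rfl, rfl⟩) <;> exact hmp rfl
  have hrow' : ∀ i, 0 < rowSum A' i := by
    intro i
    have : rowSum A i ≤ rowSum A' i :=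
      Finset.sum_le_sum fun j _ => hle i j
    linarith [hrow i]
  have hcluster' : ∀ i j, y i ≠ y j → A' i j = 0 := by
    intro i j hij
    rw [hA' i j]
    split
    · next h =>
      rcases h with ⟨h1, h2⟩ | ⟨h1, h2⟩
      · rw [h1, h2] at hij; exact absurd hy hij
      · rw [h1, h2] at hij; exact absurd hy.symm hij
    · exact hcluster i j hij
  refine ⟨hsym', hnonneg', hdiag', hrow', hcluster', ?_⟩
  have hpat : ∀ i j, 0 < A i j → 0 < A' i j := fun i j h => lt_of_lt_of_le h (hle i j)
  have hsub : (Finset.univ.filter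
        (fun i : Fin n => l ≤ (i : ℕ) ∧ CorrectlyPredicted l y α A i)) ⊆
      (Finset.univ.filter
        (fun i : Fin n => l ≤ (i : ℕ) ∧ CorrectlyPredicted l y α A' i)) := by
    intro i hi
    rw [Finset.mem_filter] at hi ⊢
    exact ⟨hi.1, hi.2.1,
      correct_mono l y hα0 hα1 hnonneg hrow hcluster hnonneg' hrow' hcluster' hpat i hi.2.2⟩
  have hden : (0 : ℝ) < (n : ℝ) - (l : ℝ) := by
    have : (l : ℝ) < (n : ℝ) := by exact_mod_cast hln
    linarith
  unfold AccLP
  apply (div_le_div_iff_of_pos_right hden).mpr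
  exact_mod_cast Finset.card_le_card hsub
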